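/- Let D be a minimum weight cover of G and let H be the subgraph of G consisting of edges uv with w(u,v) = D(u) + D(v) (the tight edges). If K is a matching of H that matches every node u with D(u) > 0, then K is a maximum weight matching of G. -/
import Mathlib


open Finset

variable {V : Type*} [Fintype V] [DecidableEq V]

/-- `C` is a (weighted vertex) cover of the bipartite graph on parts `X`, `Y`
with edge weights `w` (where `w x y = 0` means no edge). -/
def IsCover (X Y : Finset V) (w : V → V → ℕ) (C : V → ℕ) : Prop :=
  ∀ x ∈ X, ∀ y ∈ Y, w x y ≤ C x + C y

/-- The weight of a cover: the sum of its values over all nodes. -/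
def coverWt (X Y : Finset V) (C : V → ℕ) : ℕ := ∑ u ∈ X ∪ Y, C u

/-- `M` is a matching of the weighted bipartite graph: a set of pairwise
node-disjoint edges, each going from `X` to `Y` with positive weight. -/
def IsBMatching (X Y : Finset V) (w : V → V → ℕ) (M : Finset (V × V)) : Prop :=
  (∀ e ∈ M, e.1 ∈ X ∧ e.2 ∈ Y ∧ 0 < w e.1 e.2) ∧
  (∀ e ∈ M, ∀ f ∈ M, e ≠ f → e.1 ≠ f.1 ∧ e.2 ≠ f.2)

/-- The total weight of a matching. -/
def mWt (w : V → V → ℕ) (M : Finset (V × V)) : ℕ := ∑ e ∈ M, w e.1 e.2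

/-- The sum of `D` over the endpoints of a matching splits as a sum over the matching. -/
lemma endpoint_sum (X Y : Finset V) (hXY : Disjoint X Y) (w : V → V → ℕ)
    (D : V → ℕ) (M : Finset (V × V)) (hM : IsBMatching X Y w M) :
    ∑ u ∈ M.image Prod.fst ∪ M.image Prod.snd, D u
      = ∑ e ∈ M, (D e.1 + D e.2) := by
  have hfst : Set.InjOn Prod.fst (M : Set (V × V)) := by
    intro a ha b hb h
    by_contra hne
    exact (hM.2 a ha b hb hne).1 h
  have hsnd : Set.InjOn Prod.snd (M : Set (V × V)) := by
    intro a ha b hb h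
    by_contra hne
    exact (hM.2 a ha b hb hne).2 h
  have hdisj : Disjoint (M.image Prod.fst) (M.image Prod.snd) := by
    refine Finset.disjoint_left.mpr ?_
    intro u hu hv
    obtain ⟨e, he, rfl⟩ := Finset.mem_image.mp hu
    obtain ⟨f, hf, hef⟩ := Finset.mem_image.mp hv
    exact Finset.disjoint_left.mp hXY (hM.1 e he).1 (hef ▸ (hM.1 f hf).2.1)
  rw [Finset.sum_union hdisj, Finset.sum_image (fun a ha b hb => hfst ha hb),
    Finset.sum_image (fun a ha b hb => hsnd ha hb), ← Finset.sum_add_distrib]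

/-- Weak duality: any matching weighs at most any cover. -/
lemma matching_le_cover (X Y : Finset V) (hXY : Disjoint X Y) (w : V → V → ℕ)
    (D : V → ℕ) (hD : IsCover X Y w D)
    (M : Finset (V × V)) (hM : IsBMatching X Y w M) :
    mWt w M ≤ coverWt X Y D := by
  have h1 : mWt w M ≤ ∑ e ∈ M, (D e.1 + D e.2) :=
    Finset.sum_le_sum fun e he => hD e.1 (hM.1 e he).1 e.2 (hM.1 e he).2.1
  rw [← endpoint_sum X Y hXY w D M hM] at h1
  refine h1.trans (Finset.sum_le_sum_of_subset ?_)
  intro u hu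
  rcases Finset.mem_union.mp hu with h | h
  · obtain ⟨e, he, rfl⟩ := Finset.mem_image.mp h
    exact Finset.mem_union_left _ (hM.1 e he).1
  · obtain ⟨e, he, rfl⟩ := Finset.mem_image.mp h
    exact Finset.mem_union_right _ (hM.1 e he).2.1

theorem tight_matching_is_max
    (X Y : Finset V) (hXY : Disjoint X Y) (w : V → V → ℕ)
    (D : V → ℕ) (hD : IsCover X Y w D)
    (hDmin : ∀ C' : V → ℕ, IsCover X Y w C' → coverWt X Y D ≤ coverWt X Y C')
    (K : Finset (V × V)) (hK : IsBMatching X Y w K)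
    (htight : ∀ e ∈ K, w e.1 e.2 = D e.1 + D e.2)
    (hmatched : ∀ u ∈ X ∪ Y, 0 < D u → ∃ e ∈ K, e.1 = u ∨ e.2 = u) :
    ∀ M : Finset (V × V), IsBMatching X Y w M → mWt w M ≤ mWt w K := by
  intro M hM
  have hKeq : mWt w K = coverWt X Y D := by
    have h1 : mWt w K = ∑ e ∈ K, (D e.1 + D e.2) :=
      Finset.sum_congr rfl fun e he => htight e he
    rw [h1, ← endpoint_sum X Y hXY w D K hK]
    unfold coverWt
    refine (Finset.sum_subset ?_ ?_)
    · intro u hu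
      rcases Finset.mem_union.mp hu with h | h
      · obtain ⟨e, he, rfl⟩ := Finset.mem_image.mp h
        exact Finset.mem_union_left _ (hK.1 e he).1
      · obtain ⟨e, he, rfl⟩ := Finset.mem_image.mp h
        exact Finset.mem_union_right _ (hK.1 e he).2.1
    · intro u hu hnot
      by_contra hpos
      obtain ⟨e, he, h | h⟩ := hmatched u hu (Nat.pos_of_ne_zero hpos)
      · exact hnot (Finset.mem_union_left _ (Finset.mem_image.mpr ⟨e, he, h⟩))
      · exact hnot (Finset.mem_union_right _ (Finset.mem_image.mpr ⟨e, he, h⟩))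
  rw [hKeq]
  exact matching_le_cover X Y hXY w D hD M hM
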